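/- Let P be a poset with the Alexandrov topology, p ∈ P, and consider a cocartesian square of P-stratified spaces with pushout Y. If Q ⊆ P is open (i.e. upward closed) or closed (i.e. downward closed) in P, then restricting all four spaces to the preimage of Q yields a cocartesian square of topological spaces, with no assumptions on the maps. -/

import Mathlib

universe u

/-- The Alexandrov topology on a poset: open sets are the upward closed sets
(equivalently, closed sets are the downward closed sets). -/
def alexandrovTop (P : Type*) [Preorder P] : TopologicalSpace P where
  IsOpen U := IsUpperSet U
  isOpen_univ := isUpperSet_univ
  isOpen_inter := fun _ _ h₁ h₂ => h₁.inter h₂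
  isOpen_sUnion := fun _ h => isUpperSet_sUnion h

/-- A commuting square of topological spaces is cocartesian (a pushout) if it satisfies
the universal property of pushouts among topological spaces. -/
def IsTopPushout {A B X Y : Type u}
    [TopologicalSpace A] [TopologicalSpace B] [TopologicalSpace X] [TopologicalSpace Y]
    (fAB : A → B) (fAX : A → X) (fBY : B → Y) (fXY : X → Y) : Prop :=
  Continuous fAB ∧ Continuous fAX ∧ Continuous fBY ∧ Continuous fXY ∧
    (fBY ∘ fAB = fXY ∘ fAX) ∧
    ∀ (W : Type u) (_ : TopologicalSpace W) (u : X → W) (v : B → W),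
      Continuous u → Continuous v → u ∘ fAX = v ∘ fAB →
        ∃! w : Y → W, Continuous w ∧ w ∘ fXY = u ∧ w ∘ fBY = v

section Aux

variable {A B X Y : Type u}
    [TopologicalSpace A] [TopologicalSpace B] [TopologicalSpace X] [TopologicalSpace Y]
    {fAB : A → B} {fAX : A → X} {fBY : B → Y} {fXY : X → Y}

/-- The two maps into a topological pushout are jointly surjective. -/
theorem IsTopPushout.surj (hpo : IsTopPushout fAB fAX fBY fXY) (y : Y) :
    (∃ x, fXY x = y) ∨ (∃ b, fBY b = y) := by
  obtain ⟨-, -, -, -, -, huniv⟩ := hpo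
  obtain ⟨w, -, huniq⟩ := huniv (ULift.{u} Prop) ⊤ (fun _ => ⟨True⟩) (fun _ => ⟨True⟩)
    continuous_top continuous_top rfl
  have h1 : (fun _ : Y => (⟨True⟩ : ULift Prop)) = w :=
    huniq _ ⟨continuous_top, rfl, rfl⟩
  have h2 : (fun y : Y => (⟨(∃ x, fXY x = y) ∨ (∃ b, fBY b = y)⟩ : ULift Prop)) = w := by
    refine huniq _ ⟨continuous_top, ?_, ?_⟩
    · funext x
      exact congrArg ULift.up (eq_true (Or.inl ⟨x, rfl⟩))
    · funext b
      exact congrArg ULift.up (eq_true (Or.inr ⟨b, rfl⟩))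
  have h3 := congrArg ULift.down (congrFun (h2.trans h1.symm) y)
  exact of_eq_true h3

/-- A set in a topological pushout is open as soon as both its preimages are open. -/
theorem IsTopPushout.isOpen_of_preimages (hpo : IsTopPushout fAB fAX fBY fXY) (S : Set Y)
    (hX : IsOpen (fXY ⁻¹' S)) (hB : IsOpen (fBY ⁻¹' S)) : IsOpen S := by
  have hsurj := hpo.surj
  obtain ⟨-, -, -, -, hcomm, huniv⟩ := hpo
  obtain ⟨w, ⟨hwc, hw1, hw2⟩, -⟩ := huniv (ULift.{u} Prop) inferInstance
    (fun x => ⟨fXY x ∈ S⟩) (fun b => ⟨fBY b ∈ S⟩)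
    (continuous_uliftUp.comp (continuous_Prop.mpr hX))
    (continuous_uliftUp.comp (continuous_Prop.mpr hB))
    (by
      funext a
      exact congrArg ULift.up (by rw [show fBY (fAB a) = fXY (fAX a) from congrFun hcomm a]))
  have hwS : ∀ y, w y = ⟨y ∈ S⟩ := by
    intro y
    rcases hsurj y with ⟨x, rfl⟩ | ⟨b, rfl⟩
    · exact congrFun hw1 x
    · exact congrFun hw2 b
  have hSeq : S = w ⁻¹' (ULift.down ⁻¹' {q : Prop | q}) := by
    ext y
    simp [hwS y]
  rw [hSeq]
  exact (((continuous_Prop.mp continuous_id).preimage continuous_uliftDown).preimage hwc)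

/-- A set in a topological pushout is closed as soon as both its preimages are closed. -/
theorem IsTopPushout.isClosed_of_preimages (hpo : IsTopPushout fAB fAX fBY fXY) (S : Set Y)
    (hX : IsClosed (fXY ⁻¹' S)) (hB : IsClosed (fBY ⁻¹' S)) : IsClosed S := by
  rw [← isOpen_compl_iff]
  exact hpo.isOpen_of_preimages Sᶜ hX.isOpen_compl hB.isOpen_compl

end Aux

/-- Given a cocartesian square of `P`-stratified spaces (spaces with a continuous map to the
poset `P` with its Alexandrov topology) and a subset `Q ⊆ P` which is upward closed
(i.e. open) or downward closed (i.e. closed), restricting all four spaces to the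
preimage of `Q` yields a cocartesian square of topological spaces, with no assumptions
on the maps. -/
theorem isTopPushout_restrict_of_upper_or_lower {P : Type u} [PartialOrder P] (p : P)
    {A B X Y : Type u}
    [TopologicalSpace A] [TopologicalSpace B] [TopologicalSpace X] [TopologicalSpace Y]
    (sA : A → P) (sB : B → P) (sX : X → P) (sY : Y → P)
    (hsA : @Continuous _ _ _ (alexandrovTop P) sA) (hsB : @Continuous _ _ _ (alexandrovTop P) sB)
    (hsX : @Continuous _ _ _ (alexandrovTop P) sX) (hsY : @Continuous _ _ _ (alexandrovTop P) sY)
    (fAB : A → B) (fAX : A → X) (fBY : B → Y) (fXY : X → Y)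
    (hstrB : ∀ a, sB (fAB a) = sA a) (hstrX : ∀ a, sX (fAX a) = sA a)
    (hstrYB : ∀ b, sY (fBY b) = sB b) (hstrYX : ∀ x, sY (fXY x) = sX x)
    (hpo : IsTopPushout fAB fAX fBY fXY)
    (Q : Set P) (hQ : IsUpperSet Q ∨ IsLowerSet Q) :
    IsTopPushout
      (fun a : {a : A // sA a ∈ Q} =>
        (⟨fAB a.1, by rw [hstrB]; exact a.2⟩ : {b : B // sB b ∈ Q}))
      (fun a : {a : A // sA a ∈ Q} =>
        (⟨fAX a.1, by rw [hstrX]; exact a.2⟩ : {x : X // sX x ∈ Q}))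
      (fun b : {b : B // sB b ∈ Q} =>
        (⟨fBY b.1, by rw [hstrYB]; exact b.2⟩ : {y : Y // sY y ∈ Q}))
      (fun x : {x : X // sX x ∈ Q} =>
        (⟨fXY x.1, by rw [hstrYX]; exact x.2⟩ : {y : Y // sY y ∈ Q})) := by
  classical
  have hsurj := hpo.surj
  have hopen := hpo.isOpen_of_preimages
  have hclosed := hpo.isClosed_of_preimages
  obtain ⟨hAB, hAX, hBY, hXY, hcomm, huniv⟩ := hpo
  refine ⟨(hAB.comp continuous_subtype_val).subtype_mk _,
    (hAX.comp continuous_subtype_val).subtype_mk _,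
    (hBY.comp continuous_subtype_val).subtype_mk _,
    (hXY.comp continuous_subtype_val).subtype_mk _,
    ?_, ?_⟩
  · funext a
    exact Subtype.ext (congrFun hcomm a.1)
  intro W tW u v hu hv huv
  -- extend `u` and `v` to all of `X` and `B` with a junk value
  set U : X → W ⊕ PUnit.{u+1} :=
    fun x => if h : sX x ∈ Q then Sum.inl (u ⟨x, h⟩) else Sum.inr PUnit.unit with hU
  set V : B → W ⊕ PUnit.{u+1} :=
    fun b => if h : sB b ∈ Q then Sum.inl (v ⟨b, h⟩) else Sum.inr PUnit.unit with hV
  obtain ⟨Wm, ⟨-, hWm1, hWm2⟩, -⟩ := huniv (W ⊕ PUnit.{u+1}) ⊤ U V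
    continuous_top continuous_top
    (by
      funext a
      show U (fAX a) = V (fAB a)
      by_cases h : sA a ∈ Q
      · have h1 : sX (fAX a) ∈ Q := by rw [hstrX]; exact h
        have h2 : sB (fAB a) ∈ Q := by rw [hstrB]; exact h
        rw [hU, hV]
        simp only [dif_pos h1, dif_pos h2]
        exact congrArg Sum.inl (congrFun huv ⟨a, h⟩)
      · have h1 : ¬ sX (fAX a) ∈ Q := by rw [hstrX]; exact h
        have h2 : ¬ sB (fAB a) ∈ Q := by rw [hstrB]; exact h
        rw [hU, hV]
        simp only [dif_neg h1, dif_neg h2])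
  have hWmX : ∀ (x : X) (h : sX x ∈ Q), Wm (fXY x) = Sum.inl (u ⟨x, h⟩) := by
    intro x h
    have := congrFun hWm1 x
    rw [hU] at this
    simpa only [dif_pos h, Function.comp_apply] using this
  have hWmB : ∀ (b : B) (h : sB b ∈ Q), Wm (fBY b) = Sum.inl (v ⟨b, h⟩) := by
    intro b h
    have := congrFun hWm2 b
    rw [hV] at this
    simpa only [dif_pos h, Function.comp_apply] using this
  have hex : ∀ y : {y : Y // sY y ∈ Q}, ∃ a : W, Wm y.1 = Sum.inl a := by
    rintro ⟨y, hy⟩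
    rcases hsurj y with ⟨x, rfl⟩ | ⟨b, rfl⟩
    · exact ⟨_, hWmX x (by rwa [← hstrYX x])⟩
    · exact ⟨_, hWmB b (by rwa [← hstrYB b])⟩
  set w : {y : Y // sY y ∈ Q} → W := fun y => (hex y).choose with hw
  have hw_eq : ∀ (y : {y : Y // sY y ∈ Q}) (a : W), Wm y.1 = Sum.inl a → w y = a :=
    fun y a h => Sum.inl.inj ((hex y).choose_spec.symm.trans h)
  have hwu : ∀ x : {x : X // sX x ∈ Q},
      w ⟨fXY x.1, by rw [hstrYX]; exact x.2⟩ = u x := by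
    rintro ⟨x, hx⟩
    exact hw_eq _ _ (hWmX x hx)
  have hwv : ∀ b : {b : B // sB b ∈ Q},
      w ⟨fBY b.1, by rw [hstrYB]; exact b.2⟩ = v b := by
    rintro ⟨b, hb⟩
    exact hw_eq _ _ (hWmB b hb)
  -- the key preimage identities
  have hSX : ∀ O : Set W,
      fXY ⁻¹' {y : Y | ∃ hy : sY y ∈ Q, w ⟨y, hy⟩ ∈ O} = Subtype.val '' (u ⁻¹' O) := by
    intro O
    ext x
    simp only [Set.mem_preimage, Set.mem_setOf_eq, Set.mem_image]
    constructor
    · rintro ⟨hy, hO⟩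
      have hx : sX x ∈ Q := by rwa [← hstrYX x]
      refine ⟨⟨x, hx⟩, ?_, rfl⟩
      rwa [hw_eq ⟨fXY x, hy⟩ (u ⟨x, hx⟩) (hWmX x hx)] at hO
    · rintro ⟨⟨x', hx'⟩, hmem, rfl⟩
      refine ⟨by rwa [hstrYX], ?_⟩
      rwa [hw_eq _ _ (hWmX x' hx')]
  have hSB : ∀ O : Set W,
      fBY ⁻¹' {y : Y | ∃ hy : sY y ∈ Q, w ⟨y, hy⟩ ∈ O} = Subtype.val '' (v ⁻¹' O) := by
    intro O
    ext b
    simp only [Set.mem_preimage, Set.mem_setOf_eq, Set.mem_image]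
    constructor
    · rintro ⟨hy, hO⟩
      have hb : sB b ∈ Q := by rwa [← hstrYB b]
      refine ⟨⟨b, hb⟩, ?_, rfl⟩
      rwa [hw_eq ⟨fBY b, hy⟩ (v ⟨b, hb⟩) (hWmB b hb)] at hO
    · rintro ⟨⟨b', hb'⟩, hmem, rfl⟩
      refine ⟨by rwa [hstrYB], ?_⟩
      rwa [hw_eq _ _ (hWmB b' hb')]
  have hwpre : ∀ O : Set W,
      w ⁻¹' O = Subtype.val ⁻¹' {y : Y | ∃ hy : sY y ∈ Q, w ⟨y, hy⟩ ∈ O} := by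
    intro O
    ext ⟨y, hy⟩
    simp only [Set.mem_preimage, Set.mem_setOf_eq]
    exact ⟨fun h => ⟨hy, h⟩, fun ⟨hy', h⟩ => h⟩
  have hwc : Continuous w := by
    rcases hQ with hQu | hQl
    · -- upper (open) case
      have hXQ : IsOpen {x : X | sX x ∈ Q} := @Continuous.isOpen_preimage _ _ _ (alexandrovTop P) sX hsX Q hQu
      have hBQ : IsOpen {b : B | sB b ∈ Q} := @Continuous.isOpen_preimage _ _ _ (alexandrovTop P) sB hsB Q hQu
      rw [continuous_def]
      intro O hO
      rw [hwpre O]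
      refine IsOpen.preimage continuous_subtype_val (hopen _ ?_ ?_)
      · rw [hSX O]
        exact hXQ.isOpenMap_subtype_val _ (hO.preimage hu)
      · rw [hSB O]
        exact hBQ.isOpenMap_subtype_val _ (hO.preimage hv)
    · -- lower (closed) case
      have hXQ : IsClosed {x : X | sX x ∈ Q} := by
        rw [← isOpen_compl_iff]
        exact @Continuous.isOpen_preimage _ _ _ (alexandrovTop P) sX hsX Qᶜ hQl.compl
      have hBQ : IsClosed {b : B | sB b ∈ Q} := by
        rw [← isOpen_compl_iff]
        exact @Continuous.isOpen_preimage _ _ _ (alexandrovTop P) sB hsB Qᶜ hQl.compl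
      rw [continuous_iff_isClosed]
      intro C hC
      rw [hwpre C]
      refine IsClosed.preimage continuous_subtype_val (hclosed _ ?_ ?_)
      · rw [hSX C]
        exact hXQ.isClosedEmbedding_subtypeVal.isClosedMap _ (hC.preimage hu)
      · rw [hSB C]
        exact hBQ.isClosedEmbedding_subtypeVal.isClosedMap _ (hC.preimage hv)
  refine ⟨w, ⟨hwc, funext hwu, funext hwv⟩, ?_⟩
  rintro w' ⟨-, hw'1, hw'2⟩
  funext ⟨y, hy⟩
  rcases hsurj y with ⟨x, rfl⟩ | ⟨b, rfl⟩
  · have hx : sX x ∈ Q := by rwa [← hstrYX x]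
    exact (congrFun hw'1 ⟨x, hx⟩).trans (hwu ⟨x, hx⟩).symm
  · have hb : sB b ∈ Q := by rwa [← hstrYB b]
    exact (congrFun hw'2 ⟨b, hb⟩).trans (hwv ⟨b, hb⟩).symm
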